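/- For the trivializable 2-ARS on the torus T² = [−π,π]² (standard identifications) with orthonormal frame X = (1,0), Y = (0, 1 − cos x), the integral ∫_{T²∖Z} K dA diverges to −∞, where Z = {x = 0}, K = (cos x − 2)/(2 sin²(x/2)) and dA = (1 − cos x)⁻¹ dx dy. -/

import Mathlib

open Filter

noncomputable def ctF (x : ℝ) : ℝ :=
  (3/2) * (Real.cos (x/2) / Real.sin (x/2)) + (1/6) * (Real.cos (x/2) / Real.sin (x/2))^3

lemma cos_eq_half (x : ℝ) : Real.cos x = 1 - 2 * Real.sin (x/2)^2 := by
  have h := Real.cos_two_mul (x/2)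
  have h2 : 2 * (x/2) = x := by ring
  rw [h2] at h
  nlinarith [Real.sin_sq_add_cos_sq (x/2)]

lemma hasDerivAt_ctF {x : ℝ} (hx : Real.sin (x/2) ≠ 0) :
    HasDerivAt ctF
      ((Real.cos x - 2) / (2 * (Real.sin (x / 2)) ^ 2 * (1 - Real.cos x))) x := by
  have hhalf : HasDerivAt (fun x : ℝ => x/2) (1/2) x := by
    simpa using (hasDerivAt_id x).div_const 2
  have hs : HasDerivAt (fun x => Real.sin (x/2)) (Real.cos (x/2) * (1/2)) x :=
    by have := (Real.hasDerivAt_sin (x/2)).comp x hhalf; exact this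
  have hc : HasDerivAt (fun x => Real.cos (x/2)) (-Real.sin (x/2) * (1/2)) x :=
    by have := (Real.hasDerivAt_cos (x/2)).comp x hhalf; exact this
  have hct : HasDerivAt (fun x => Real.cos (x/2) / Real.sin (x/2))
      ((-Real.sin (x/2) * (1/2) * Real.sin (x/2)
        - Real.cos (x/2) * (Real.cos (x/2) * (1/2))) / (Real.sin (x/2))^2) x :=
    hc.div hs hx
  have hF := (hct.const_mul ((3:ℝ)/2)).add ((hct.pow 3).const_mul ((1:ℝ)/6))
  refine hF.congr_deriv (Eq.symm ?_)
  rw [cos_eq_half x]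
  have hpy := Real.sin_sq_add_cos_sq (x/2)
  set s := Real.sin (x/2) with hsdef
  set c := Real.cos (x/2) with hcdef
  have hD : -s * (1/2) * s - c * (c * (1/2)) = -(1/2) := by linear_combination (-(1:ℝ)/2) * hpy
  rw [hD]
  have hc2 : c^2 = 1 - s^2 := by linarith
  norm_num
  rw [div_pow, hc2]
  field_simp
  ring

lemma sin_half_pos {x : ℝ} (h0 : 0 < x) (hπ : x ≤ Real.pi) : 0 < Real.sin (x/2) := by
  apply Real.sin_pos_of_pos_of_lt_pi (by linarith)
  have := Real.pi_pos
  linarith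

lemma integral_eq {δ : ℝ} (h0 : 0 < δ) (hπ : δ < Real.pi) :
    (∫ x in δ..Real.pi,
        (Real.cos x - 2) / (2 * (Real.sin (x / 2)) ^ 2 * (1 - Real.cos x)))
      = - ctF δ := by
  have key : ∀ x ∈ Set.uIcc δ Real.pi,
      HasDerivAt ctF
        ((Real.cos x - 2) / (2 * (Real.sin (x / 2)) ^ 2 * (1 - Real.cos x))) x := by
    intro x hx
    rw [Set.uIcc_of_le hπ.le] at hx
    exact hasDerivAt_ctF (sin_half_pos (lt_of_lt_of_le h0 hx.1) hx.2).ne'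
  have hint : IntervalIntegrable
      (fun x => (Real.cos x - 2) / (2 * (Real.sin (x / 2)) ^ 2 * (1 - Real.cos x)))
      MeasureTheory.volume δ Real.pi := by
    apply ContinuousOn.intervalIntegrable
    apply ContinuousOn.div
    · fun_prop
    · fun_prop
    · intro x hx
      rw [Set.uIcc_of_le hπ.le] at hx
      have hs := sin_half_pos (lt_of_lt_of_le h0 hx.1) hx.2
      have hcos : 1 - Real.cos x > 0 := by
        rw [cos_eq_half x]; nlinarith
      positivity
  rw [intervalIntegral.integral_eq_sub_of_hasDerivAt key hint]
  have : ctF Real.pi = 0 := by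
    unfold ctF
    rw [Real.cos_pi_div_two]
    ring
  rw [this]
  ring

/-- Non-generic counterexample on the torus: for the frame X = (1,0),
Y = (0, 1 − cos x), the integral of K dA diverges to −∞; concretely,
∫_δ^π (cos x − 2)/(2 sin²(x/2)(1 − cos x)) dx → −∞ as δ → 0⁺. -/
theorem stmt12 :
    Tendsto (fun δ : ℝ =>
        ∫ x in δ..Real.pi,
          (Real.cos x - 2) / (2 * (Real.sin (x / 2)) ^ 2 * (1 - Real.cos x)))
      (nhdsWithin 0 (Set.Ioi 0)) atBot := by
  have hπ := Real.pi_pos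
  -- eventual equality
  have hev : ∀ᶠ δ in nhdsWithin 0 (Set.Ioi 0),
      (∫ x in δ..Real.pi,
        (Real.cos x - 2) / (2 * (Real.sin (x / 2)) ^ 2 * (1 - Real.cos x))) = - ctF δ := by
    filter_upwards [Ioo_mem_nhdsGT_of_mem (Set.mem_Ico.mpr ⟨le_refl 0, hπ⟩)] with δ hδ
    exact integral_eq hδ.1 hδ.2
  rw [tendsto_congr' hev]
  -- cot(δ/2) → +∞
  have hcot : Tendsto (fun δ : ℝ => Real.cos (δ/2) / Real.sin (δ/2))
      (nhdsWithin 0 (Set.Ioi 0)) atTop := by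
    have hnum : Tendsto (fun δ : ℝ => Real.cos (δ/2)) (nhdsWithin 0 (Set.Ioi 0)) (nhds 1) := by
      have : Tendsto (fun δ : ℝ => Real.cos (δ/2)) (nhds 0) (nhds 1) := by
        have : ContinuousAt (fun δ : ℝ => Real.cos (δ/2)) 0 := by fun_prop
        simpa using this.tendsto
      exact this.mono_left nhdsWithin_le_nhds
    have hsin : Tendsto (fun δ : ℝ => Real.sin (δ/2))
        (nhdsWithin 0 (Set.Ioi 0)) (nhdsWithin 0 (Set.Ioi 0)) := by
      rw [tendsto_nhdsWithin_iff]
      constructor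
      · have h : Tendsto (fun δ : ℝ => Real.sin (δ/2)) (nhds 0) (nhds 0) := by
          have h2 : ContinuousAt (fun δ : ℝ => Real.sin (δ/2)) 0 := by fun_prop
          simpa using h2.tendsto
        exact h.mono_left nhdsWithin_le_nhds
      · filter_upwards [Ioo_mem_nhdsGT_of_mem (Set.mem_Ico.mpr ⟨le_refl 0, hπ⟩)] with δ hδ
        exact sin_half_pos hδ.1 hδ.2.le
    have hinv : Tendsto (fun δ : ℝ => (Real.sin (δ/2))⁻¹)
        (nhdsWithin 0 (Set.Ioi 0)) atTop := tendsto_inv_nhdsGT_zero.comp hsin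
    simpa [div_eq_mul_inv] using hnum.pos_mul_atTop one_pos hinv
  have hF : Tendsto ctF (nhdsWithin 0 (Set.Ioi 0)) atTop := by
    have h1 : Tendsto (fun δ : ℝ => (3/2) * (Real.cos (δ/2) / Real.sin (δ/2)))
        (nhdsWithin 0 (Set.Ioi 0)) atTop := hcot.const_mul_atTop (by norm_num)
    have h2 : Tendsto (fun δ : ℝ => (1/6) * (Real.cos (δ/2) / Real.sin (δ/2))^3)
        (nhdsWithin 0 (Set.Ioi 0)) atTop :=
      ((tendsto_pow_atTop (n := 3) (by norm_num)).comp hcot).const_mul_atTop (by norm_num)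
    exact Filter.Tendsto.atTop_add_atTop h1 h2
  exact (Filter.tendsto_neg_atTop_atBot.comp hF).congr (fun δ => rfl)
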